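/- Fix k ≥ 2. The functional (μ_1,…,μ_k) ↦ MOT(μ_1,…,μ_k), defined on the product of k copies of the probability simplex over X, is Lipschitz with respect to the ℓ¹ distance: there exists a constant K > 0, depending only on X and k, such that for all tuples of probability measures (μ_1,…,μ_k) and (μ̃_1,…,μ̃_k) on X, |MOT(μ_1,…,μ_k) − MOT(μ̃_1,…,μ̃_k)| ≤ K · Σ_{i=1}^k ‖μ_i − μ̃_i‖₁. -/

import Mathlib

open scoped BigOperators

/-- The variance cost of the tuple `(x_{t 1}, …, x_{t k})`. -/
noncomputable def motCost {d k N : ℕ} (x : Fin N → EuclideanSpace ℝ (Fin d))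
    (t : Fin k → Fin N) : ℝ :=
  (k : ℝ)⁻¹ * ∑ i, ‖x (t i) - (k : ℝ)⁻¹ • ∑ m, x (t m)‖ ^ 2

/-- A probability measure on a finite set with `N` points. -/
def IsProbVec {N : ℕ} (μ : Fin N → ℝ) : Prop :=
  (∀ j, 0 ≤ μ j) ∧ ∑ j, μ j = 1

/-- A multicoupling of `(μ_1,…,μ_k)`. -/
def IsMulticoupling {k N : ℕ} (μ : Fin k → Fin N → ℝ)
    (π : (Fin k → Fin N) → ℝ) : Prop :=
  (∀ t, 0 ≤ π t) ∧ (∑ t, π t = 1) ∧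
    ∀ (i : Fin k) (j : Fin N),
      ∑ t ∈ Finset.univ.filter (fun t : Fin k → Fin N => t i = j), π t = μ i j

/-- The optimal value of the multimarginal optimal transport program. -/
noncomputable def MOT {d k N : ℕ} (x : Fin N → EuclideanSpace ℝ (Fin d))
    (μ : Fin k → Fin N → ℝ) : ℝ :=
  sInf {v | ∃ π, IsMulticoupling μ π ∧ v = ∑ t, motCost x t * π t}


namespace MOTAux
variable {k N : ℕ}
variable {k N : ℕ}

def marg (π : (Fin k → Fin N) → ℝ) (i : Fin k) (j : Fin N) : ℝ :=
  ∑ t ∈ Finset.univ.filter (fun t : Fin k → Fin N => t i = j), π t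

lemma marg_def (π : (Fin k → Fin N) → ℝ) (i : Fin k) (j : Fin N) :
    marg π i j = ∑ t, if t i = j then π t else 0 := Finset.sum_filter _ _

lemma sum_marg (π : (Fin k → Fin N) → ℝ) (i : Fin k) :
    ∑ j, marg π i j = ∑ t, π t := Finset.sum_fiberwise _ _ _

lemma marg_nonneg {π : (Fin k → Fin N) → ℝ} (hπ : ∀ t, 0 ≤ π t) (i : Fin k) (j : Fin N) :
    0 ≤ marg π i j := Finset.sum_nonneg fun t _ => hπ t

lemma marg_add (π σ : (Fin k → Fin N) → ℝ) (i : Fin k) (j : Fin N) :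
    marg (fun t => π t + σ t) i j = marg π i j + marg σ i j := Finset.sum_add_distrib

lemma marg_sub (π σ : (Fin k → Fin N) → ℝ) (i : Fin k) (j : Fin N) :
    marg (fun t => π t - σ t) i j = marg π i j - marg σ i j := Finset.sum_sub_distrib _ _

def updEquiv (i : Fin k) : ((Fin k → Fin N) × Fin N) ≃ ((Fin k → Fin N) × Fin N) where
  toFun p := (Function.update p.1 i p.2, p.1 i)
  invFun p := (Function.update p.1 i p.2, p.1 i)
  left_inv p := by cases p; simp [Function.update_idem]
  right_inv p := by cases p; simp [Function.update_idem]

lemma pair_sum (i : Fin k) (F : (Fin k → Fin N) → Fin N → ℝ) :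
    ∑ t, ∑ l, F t l = ∑ t, ∑ l, F (Function.update t i l) (t i) := by
  rw [← Fintype.sum_prod_type (f := fun p : (Fin k → Fin N) × Fin N => F p.1 p.2),
      ← Fintype.sum_prod_type
        (f := fun p : (Fin k → Fin N) × Fin N => F (Function.update p.1 i p.2) (p.1 i))]
  exact (Equiv.sum_comp (updEquiv i) (fun p => F p.1 p.2)).symm

lemma abs_eq_add_sub_two_min (a b : ℝ) : |a - b| = a + b - 2 * min b a := by
  rcases le_total a b with h | h
  · rw [abs_of_nonpos (by linarith), min_eq_right h]; ring
  · rw [abs_of_nonneg (by linarith), min_eq_left h]; ring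

lemma swap_step (i : Fin k) (μ : Fin k → Fin N → ℝ) (π : (Fin k → Fin N) → ℝ)
    (hπ : IsMulticoupling μ π) (ν' : Fin N → ℝ) (hν' : IsProbVec ν') :
    ∃ π' : (Fin k → Fin N) → ℝ, IsMulticoupling (Function.update μ i ν') π' ∧
      ∑ t, |π' t - π t| ≤ ∑ j, |ν' j - μ i j| := by
  obtain ⟨hπ0, hπ1, hπm⟩ := hπ
  have hmarg : ∀ (m : Fin k) (j : Fin N), marg π m j = μ m j := fun m j => hπm m j
  have hν0 : ∀ j, 0 ≤ μ i j := fun j => (hmarg i j) ▸ marg_nonneg hπ0 i j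
  have hν1 : ∑ j, μ i j = 1 := by
    rw [show ∑ j, μ i j = ∑ j, marg π i j from
      Finset.sum_congr rfl fun j _ => (hmarg i j).symm, sum_marg, hπ1]
  set ratio : Fin N → ℝ := fun j => if μ i j = 0 then 0 else min (μ i j) (ν' j) / μ i j
    with hratio
  have hr0 : ∀ j, 0 ≤ ratio j := by
    intro j; rw [hratio]; dsimp only
    split
    · exact le_refl 0
    · exact div_nonneg (le_min (hν0 j) (hν'.1 j)) (hν0 j)
  have hr1 : ∀ j, ratio j ≤ 1 := by
    intro j; rw [hratio]; dsimp only
    split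
    · exact zero_le_one
    · rename_i h
      exact (div_le_one (lt_of_le_of_ne (hν0 j) (Ne.symm h))).mpr (min_le_left _ _)
  have hkey : ∀ j, μ i j * ratio j = min (μ i j) (ν' j) := by
    intro j; rw [hratio]; dsimp only
    split
    · rename_i h
      rw [h, min_eq_left (hν'.1 j)]; ring
    · rename_i h
      field_simp
  set kept : (Fin k → Fin N) → ℝ := fun t => π t * ratio (t i) with hkept
  set rm : (Fin k → Fin N) → ℝ := fun t => π t - kept t with hrm
  set ρ : Fin N → ℝ := fun j => ν' j - min (μ i j) (ν' j) with hρ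
  set ε : ℝ := 1 - ∑ j, min (μ i j) (ν' j) with hε
  have hkept0 : ∀ t, 0 ≤ kept t := fun t => mul_nonneg (hπ0 t) (hr0 _)
  have hrm0 : ∀ t, 0 ≤ rm t := by
    intro t
    have := mul_le_of_le_one_right (hπ0 t) (hr1 (t i))
    simpa [hrm, hkept] using sub_nonneg.mpr this
  have hρ0 : ∀ j, 0 ≤ ρ j := fun j => sub_nonneg.mpr (min_le_right _ _)
  have hsumρ : ∑ j, ρ j = ε := by
    rw [hρ, hε, Finset.sum_sub_distrib, hν'.2]
  have hmk : ∀ j, marg kept i j = min (μ i j) (ν' j) := by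
    intro j
    have h1 : marg kept i j = marg π i j * ratio j := by
      rw [marg, marg, Finset.sum_mul]
      refine Finset.sum_congr rfl fun t ht => ?_
      rw [hkept]; dsimp only
      rw [(Finset.mem_filter.mp ht).2]
    rw [h1, hmarg i j, hkey j]
  have hsumkept : ∑ t, kept t = 1 - ε := by
    rw [← sum_marg kept i, hε]
    rw [Finset.sum_congr rfl fun j _ => hmk j]; ring
  have hsumrm : ∑ t, rm t = ε := by
    rw [hrm]; dsimp only
    rw [Finset.sum_sub_distrib, hπ1, hsumkept]; ring
  have hε0 : 0 ≤ ε := hsumrm ▸ Finset.sum_nonneg fun t _ => hrm0 t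
  have hπeq : ∀ t, π t = kept t + rm t := by intro t; rw [hrm]; ring
  rcases eq_or_lt_of_le hε0 with hz | hz
  · -- ε = 0 : ν' = μ i
    have hρz : ∀ j, ρ j = 0 := by
      intro j
      have := (Finset.sum_eq_zero_iff_of_nonneg (fun j _ => hρ0 j)).mp (hsumρ.trans hz.symm)
      exact this j (Finset.mem_univ j)
    have hle : ∀ j, ν' j ≤ μ i j := by
      intro j
      have := hρz j
      rw [hρ] at this; dsimp only at this
      have hmin : ν' j = min (μ i j) (ν' j) := by linarith
      exact hmin.le.trans (min_le_left _ _)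
    have heq : ∀ j, ν' j = μ i j := by
      have := (Finset.sum_eq_sum_iff_of_le (fun j _ => hle j)).mp (by rw [hν'.2, hν1])
      exact fun j => this j (Finset.mem_univ j)
    have hupd : Function.update μ i ν' = μ := by
      have : ν' = μ i := funext heq
      rw [this, Function.update_eq_self]
    refine ⟨π, by rw [hupd]; exact ⟨hπ0, hπ1, hπm⟩, ?_⟩
    simp only [sub_self, abs_zero, Finset.sum_const_zero]
    exact Finset.sum_nonneg fun j _ => abs_nonneg _
  · -- ε > 0
    set add : (Fin k → Fin N) → ℝ :=
      fun t => ρ (t i) * ε⁻¹ * ∑ l, rm (Function.update t i l) with hadd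
    set π' : (Fin k → Fin N) → ℝ := fun t => kept t + add t with hπ'
    have hadd0 : ∀ t, 0 ≤ add t := fun t =>
      mul_nonneg (mul_nonneg (hρ0 _) (inv_nonneg.mpr hε0))
        (Finset.sum_nonneg fun l _ => hrm0 _)
    -- total added mass
    have hsumadd : ∑ t, add t = ε := by
      have h1 : ∑ t, add t = ∑ t, ∑ l, ρ (t i) * ε⁻¹ * rm (Function.update t i l) := by
        refine Finset.sum_congr rfl fun t _ => ?_
        rw [hadd]; dsimp only; rw [Finset.mul_sum]
      rw [h1, pair_sum i (fun t l => ρ (t i) * ε⁻¹ * rm (Function.update t i l))]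
      have h2 : ∀ t : Fin k → Fin N, ∀ l,
          ρ (Function.update t i l i) * ε⁻¹ *
            rm (Function.update (Function.update t i l) i (t i)) = ρ l * ε⁻¹ * rm t := by
        intro t l
        rw [Function.update_self, Function.update_idem, Function.update_eq_self]
      calc ∑ t, ∑ l, ρ (Function.update t i l i) * ε⁻¹ *
              rm (Function.update (Function.update t i l) i (t i))
          = ∑ t : Fin k → Fin N, ∑ l, ρ l * ε⁻¹ * rm t :=
            Finset.sum_congr rfl fun t _ => Finset.sum_congr rfl fun l _ => h2 t l
        _ = ∑ t : Fin k → Fin N, (∑ l, ρ l) * (ε⁻¹ * rm t) := by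
            refine Finset.sum_congr rfl fun t _ => ?_
            rw [Finset.sum_mul]
            exact Finset.sum_congr rfl fun l _ => by ring
        _ = ε := by
            rw [hsumρ, ← Finset.mul_sum, ← Finset.mul_sum, hsumrm]
            field_simp
    -- marginal of add on coordinate i
    have hmai : ∀ j, marg add i j = ρ j := by
      intro j
      have h1 : marg add i j
          = ∑ t, ∑ l, (if t i = j then ρ (t i) * ε⁻¹ * rm (Function.update t i l) else 0) := by
        rw [marg_def]
        refine Finset.sum_congr rfl fun t _ => ?_
        split
        · rw [hadd]; dsimp only; rw [Finset.mul_sum]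
        · simp
      rw [h1, pair_sum i (fun t l => if t i = j then ρ (t i) * ε⁻¹ * rm (Function.update t i l) else 0)]
      have h2 : ∀ t : Fin k → Fin N, ∀ l,
          (if Function.update t i l i = j then
            ρ (Function.update t i l i) * ε⁻¹ *
              rm (Function.update (Function.update t i l) i (t i)) else 0)
          = (if l = j then ρ l * ε⁻¹ * rm t else 0) := by
        intro t l
        rw [Function.update_self, Function.update_idem, Function.update_eq_self]
      calc ∑ t : Fin k → Fin N, ∑ l, (if Function.update t i l i = j then
              ρ (Function.update t i l i) * ε⁻¹ *
                rm (Function.update (Function.update t i l) i (t i)) else 0)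
          = ∑ t : Fin k → Fin N, ∑ l, (if l = j then ρ l * ε⁻¹ * rm t else 0) :=
            Finset.sum_congr rfl fun t _ => Finset.sum_congr rfl fun l _ => h2 t l
        _ = ∑ t : Fin k → Fin N, ρ j * ε⁻¹ * rm t := by
            refine Finset.sum_congr rfl fun t _ => ?_
            simp
        _ = ρ j := by
            rw [← Finset.mul_sum, hsumrm]
            field_simp
    -- marginal of add on other coordinates
    have hmam : ∀ m : Fin k, m ≠ i → ∀ j, marg add m j = marg rm m j := by
      intro m hmi j
      have h1 : marg add m j
          = ∑ t, ∑ l, (if t m = j then ρ (t i) * ε⁻¹ * rm (Function.update t i l) else 0) := by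
        rw [marg_def]
        refine Finset.sum_congr rfl fun t _ => ?_
        split
        · rw [hadd]; dsimp only; rw [Finset.mul_sum]
        · simp
      rw [h1, pair_sum i (fun t l => if t m = j then ρ (t i) * ε⁻¹ * rm (Function.update t i l) else 0)]
      have h2 : ∀ t : Fin k → Fin N, ∀ l,
          (if Function.update t i l m = j then
            ρ (Function.update t i l i) * ε⁻¹ *
              rm (Function.update (Function.update t i l) i (t i)) else 0)
          = (if t m = j then ρ l * ε⁻¹ * rm t else 0) := by
        intro t l
        rw [Function.update_self, Function.update_idem, Function.update_eq_self,
          Function.update_of_ne hmi]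
      calc ∑ t : Fin k → Fin N, ∑ l, (if Function.update t i l m = j then
              ρ (Function.update t i l i) * ε⁻¹ *
                rm (Function.update (Function.update t i l) i (t i)) else 0)
          = ∑ t : Fin k → Fin N, ∑ l, (if t m = j then ρ l * ε⁻¹ * rm t else 0) :=
            Finset.sum_congr rfl fun t _ => Finset.sum_congr rfl fun l _ => h2 t l
        _ = ∑ t : Fin k → Fin N, (if t m = j then rm t else 0) := by
            refine Finset.sum_congr rfl fun t _ => ?_
            split
            · rw [← Finset.sum_mul, ← Finset.sum_mul, hsumρ]
              field_simp
            · simp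
        _ = marg rm m j := (marg_def rm m j).symm
    refine ⟨π', ⟨fun t => add_nonneg (hkept0 t) (hadd0 t), ?_, ?_⟩, ?_⟩
    · -- sums to 1
      rw [hπ']; dsimp only
      rw [Finset.sum_add_distrib, hsumkept, hsumadd]; ring
    · -- marginals
      intro m j
      have : marg π' m j = marg kept m j + marg add m j := marg_add kept add m j
      rw [show (∑ t ∈ Finset.univ.filter (fun t : Fin k → Fin N => t m = j), π' t)
          = marg π' m j from rfl, this]
      rcases eq_or_ne m i with rfl | hmi
      · rw [hmk j, hmai j, Function.update_self, hρ]; ring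
      · rw [hmam m hmi j, Function.update_of_ne hmi]
        have hrmm : marg rm m j = marg π m j - marg kept m j := marg_sub π kept m j
        rw [hrmm, hmarg m j]; ring
    · -- ℓ¹ distance
      have hdiff : ∀ t, |π' t - π t| ≤ add t + rm t := by
        intro t
        have : π' t - π t = add t - rm t := by rw [hπ', hrm]; dsimp only; ring
        rw [this]
        calc |add t - rm t| ≤ |add t| + |rm t| := abs_sub _ _
          _ = add t + rm t := by rw [abs_of_nonneg (hadd0 t), abs_of_nonneg (hrm0 t)]
      calc ∑ t, |π' t - π t| ≤ ∑ t, (add t + rm t) :=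
            Finset.sum_le_sum fun t _ => hdiff t
        _ = 2 * ε := by rw [Finset.sum_add_distrib, hsumadd, hsumrm]; ring
        _ = ∑ j, |ν' j - μ i j| := by
            have : ∀ j, |ν' j - μ i j| = ν' j + μ i j - 2 * min (μ i j) (ν' j) := fun j =>
              abs_eq_add_sub_two_min (ν' j) (μ i j)
            rw [Finset.sum_congr rfl fun j _ => this j]
            rw [show ∑ j, (ν' j + μ i j - 2 * min (μ i j) (ν' j))
              = ∑ j, ν' j + ∑ j, μ i j - 2 * ∑ j, min (μ i j) (ν' j) by
                rw [Finset.sum_sub_distrib, Finset.sum_add_distrib, Finset.mul_sum]]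
            rw [hν'.2, hν1, hε]; ring



lemma transfer (μ μ' : Fin k → Fin N → ℝ) (hμ' : ∀ i, IsProbVec (μ' i))
    (π : (Fin k → Fin N) → ℝ) (hπ : IsMulticoupling μ π) :
    ∃ π', IsMulticoupling μ' π' ∧
      ∑ t, |π' t - π t| ≤ ∑ i, ∑ j, |μ' i j - μ i j| := by
  have main : ∀ n : ℕ,
      ∃ σ, IsMulticoupling (fun i : Fin k => if (i : ℕ) < n then μ' i else μ i) σ ∧
        ∑ t, |σ t - π t| ≤
          ∑ i ∈ Finset.univ.filter (fun i : Fin k => (i : ℕ) < n), ∑ j, |μ' i j - μ i j| := by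
    intro n
    induction n with
    | zero =>
      refine ⟨π, by simpa using hπ, ?_⟩
      simp
    | succ n ih =>
      obtain ⟨σ, hσ, hσd⟩ := ih
      by_cases hnk : n < k
      · set i : Fin k := ⟨n, hnk⟩ with hi
        obtain ⟨σ', hσ', hσ'd⟩ := swap_step i _ σ hσ (μ' i) (hμ' i)
        have hupd : Function.update (fun i' : Fin k => if (i' : ℕ) < n then μ' i' else μ i') i (μ' i)
            = fun i' : Fin k => if (i' : ℕ) < n + 1 then μ' i' else μ i' := by
          funext i'
          rcases eq_or_ne i' i with rfl | hne
          · simp [hi]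
          · have hv : (i' : ℕ) ≠ n := fun h => hne (Fin.ext (by simp [hi, h]))
            have hiff : ((i' : ℕ) < n + 1) = ((i' : ℕ) < n) := by
              simp only [eq_iff_iff]; omega
            rw [Function.update_of_ne hne]; simp only [hiff]
        have hins : Finset.univ.filter (fun i' : Fin k => (i' : ℕ) < n + 1)
            = insert i (Finset.univ.filter fun i' : Fin k => (i' : ℕ) < n) := by
          ext i'
          simp only [Finset.mem_filter, Finset.mem_insert, Finset.mem_univ, true_and,
            Fin.ext_iff, hi]
          omega
        have hnotmem : i ∉ Finset.univ.filter (fun i' : Fin k => (i' : ℕ) < n) := by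
          simp [hi]
        refine ⟨σ', by rwa [hupd] at hσ', ?_⟩
        have htri : ∑ t, |σ' t - π t| ≤ ∑ t, |σ' t - σ t| + ∑ t, |σ t - π t| := by
          rw [← Finset.sum_add_distrib]
          refine Finset.sum_le_sum fun t _ => ?_
          calc |σ' t - π t| = |(σ' t - σ t) + (σ t - π t)| := by ring_nf
            _ ≤ |σ' t - σ t| + |σ t - π t| :=abs_add_le _ _
        have hc : ¬((i : ℕ) < n) := by simp [hi]
        rw [hins, Finset.sum_insert hnotmem]
        have h5 := hσ'd
        simp only [if_neg hc] at h5
        linarith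
      · refine ⟨σ, ?_, ?_⟩
        · convert hσ using 2 with i'
          have h2 : (i' : ℕ) < n := lt_of_lt_of_le i'.isLt (le_of_not_gt hnk)
          simp [h2, Nat.lt_succ_of_lt h2]
        · have : Finset.univ.filter (fun i' : Fin k => (i' : ℕ) < n + 1)
              = Finset.univ.filter (fun i' : Fin k => (i' : ℕ) < n) := by
            ext i'
            have := i'.isLt
            simp only [Finset.mem_filter, Finset.mem_univ, true_and]
            omega
          rw [this]; exact hσd
  obtain ⟨σ, hσ, hσd⟩ := main k
  refine ⟨σ, ?_, ?_⟩
  · convert hσ using 2 with i'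
    simp [i'.isLt]
  · calc ∑ t, |σ t - π t| ≤ _ := hσd
      _ = ∑ i, ∑ j, |μ' i j - μ i j| := by
        rw [Finset.filter_true_of_mem fun i _ => i.isLt]

lemma motCost_nonneg {d : ℕ} (x : Fin N → EuclideanSpace ℝ (Fin d)) (t : Fin k → Fin N) :
    0 ≤ motCost x t :=
  mul_nonneg (inv_nonneg.mpr (Nat.cast_nonneg k))
    (Finset.sum_nonneg fun _ _ => pow_nonneg (norm_nonneg _) 2)

def Sset {d : ℕ} (x : Fin N → EuclideanSpace ℝ (Fin d)) (ν : Fin k → Fin N → ℝ) : Set ℝ :=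
  {v | ∃ π, IsMulticoupling ν π ∧ v = ∑ t, motCost x t * π t}

lemma MOT_eq {d : ℕ} (x : Fin N → EuclideanSpace ℝ (Fin d)) (ν : Fin k → Fin N → ℝ) :
    MOT x ν = sInf (Sset x ν) := rfl

end MOTAux

open MOTAux in
/-- the `MOT` functional is Lipschitz on the product of `k`
copies of the probability simplex over `X`, with respect to the `ℓ¹` distance:
there is a constant `K > 0`, depending only on `X` and `k`, such that
`|MOT(μ) − MOT(μ̃)| ≤ K · ∑ i ‖μ_i − μ̃_i‖₁`. -/
theorem mot_lipschitz {d k N : ℕ} (hk : 2 ≤ k)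
    (x : Fin N → EuclideanSpace ℝ (Fin d)) (hx : Function.Injective x) :
    ∃ K : ℝ, 0 < K ∧
      ∀ μ μ' : Fin k → Fin N → ℝ,
        (∀ i, IsProbVec (μ i)) → (∀ i, IsProbVec (μ' i)) →
        |MOT x μ - MOT x μ'| ≤ K * ∑ i, ∑ j, |μ i j - μ' i j| := by
  classical
  set K : ℝ := 1 + ∑ t : Fin k → Fin N, |motCost x t| with hKdef
  have hK0 : 0 < K := by
    have : (0:ℝ) ≤ ∑ t : Fin k → Fin N, |motCost x t| :=
      Finset.sum_nonneg fun t _ => abs_nonneg _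
    rw [hKdef]; linarith
  have hCK : ∀ t : Fin k → Fin N, |motCost x t| ≤ K := by
    intro t
    have h1 : |motCost x t| ≤ ∑ t' : Fin k → Fin N, |motCost x t'| :=
      Finset.single_le_sum (f := fun t' : Fin k → Fin N => |motCost x t'|)
        (fun t' _ => abs_nonneg _) (Finset.mem_univ t)
    rw [hKdef]; linarith
  have hbdd : ∀ ν : Fin k → Fin N → ℝ, BddBelow (Sset x ν) := by
    intro ν
    refine ⟨0, fun v hv => ?_⟩
    obtain ⟨π, hπ, rfl⟩ := hv
    exact Finset.sum_nonneg fun t _ => mul_nonneg (motCost_nonneg x t) (hπ.1 t)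
  have hcost : ∀ π π' : (Fin k → Fin N) → ℝ,
      ∑ t, motCost x t * π' t ≤ ∑ t, motCost x t * π t + K * ∑ t, |π' t - π t| := by
    intro π π'
    have h1 : ∑ t, motCost x t * π' t - ∑ t, motCost x t * π t
        ≤ K * ∑ t, |π' t - π t| := by
      rw [← Finset.sum_sub_distrib, Finset.mul_sum]
      refine Finset.sum_le_sum fun t _ => ?_
      calc motCost x t * π' t - motCost x t * π t = motCost x t * (π' t - π t) := by ring
        _ ≤ |motCost x t * (π' t - π t)| := le_abs_self _
        _ = |motCost x t| * |π' t - π t| := abs_mul _ _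
        _ ≤ K * |π' t - π t| := mul_le_mul_of_nonneg_right (hCK t) (abs_nonneg _)
    linarith
  have hmain : ∀ ν ν' : Fin k → Fin N → ℝ, (∀ i, IsProbVec (ν' i)) → (Sset x ν).Nonempty →
      MOT x ν' ≤ MOT x ν + K * ∑ i, ∑ j, |ν' i j - ν i j| := by
    intro ν ν' hp hne
    have hδ : 0 ≤ ∑ i, ∑ j, |ν' i j - ν i j| :=
      Finset.sum_nonneg fun i _ => Finset.sum_nonneg fun j _ => abs_nonneg _
    have step : ∀ v ∈ Sset x ν,
        MOT x ν' - K * ∑ i, ∑ j, |ν' i j - ν i j| ≤ v := by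
      rintro v ⟨π, hπ, rfl⟩
      obtain ⟨π', hπ', hd⟩ := transfer ν ν' hp π hπ
      have h1 : MOT x ν' ≤ ∑ t, motCost x t * π' t :=
        csInf_le (hbdd ν') ⟨π', hπ', rfl⟩
      have h2 := hcost π π'
      have h3 : K * ∑ t, |π' t - π t| ≤ K * ∑ i, ∑ j, |ν' i j - ν i j| :=
        mul_le_mul_of_nonneg_left hd (le_of_lt hK0)
      linarith
    have := le_csInf hne step
    rw [MOT_eq x ν]
    linarith
  refine ⟨K, hK0, ?_⟩
  intro μ μ' hμ hμ'
  have hsym : ∑ i, ∑ j, |μ' i j - μ i j| = ∑ i, ∑ j, |μ i j - μ' i j| := by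
    refine Finset.sum_congr rfl fun i _ => Finset.sum_congr rfl fun j _ => abs_sub_comm _ _
  have hδ : 0 ≤ ∑ i, ∑ j, |μ i j - μ' i j| :=
    Finset.sum_nonneg fun i _ => Finset.sum_nonneg fun j _ => abs_nonneg _
  by_cases hne : (Sset x μ).Nonempty
  · have hne' : (Sset x μ').Nonempty := by
      obtain ⟨v, π, hπ, _⟩ := hne
      obtain ⟨π', hπ', _⟩ := transfer μ μ' hμ' π hπ
      exact ⟨_, π', hπ', rfl⟩
    have A := hmain μ μ' hμ' hne
    have B := hmain μ' μ hμ hne'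
    rw [abs_sub_le_iff]
    constructor
    · linarith
    · rw [hsym] at A; linarith
  · have hne' : ¬ (Sset x μ').Nonempty := by
      intro h
      obtain ⟨v, π, hπ, _⟩ := h
      obtain ⟨π', hπ', _⟩ := transfer μ' μ hμ π hπ
      exact hne ⟨_, π', hπ', rfl⟩
    have e1 : Sset x μ = ∅ := Set.not_nonempty_iff_eq_empty.mp hne
    have e2 : Sset x μ' = ∅ := Set.not_nonempty_iff_eq_empty.mp hne'
    rw [MOT_eq x μ, MOT_eq x μ', e1, e2, Real.sInf_empty]
    simp only [sub_self, abs_zero]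
    exact mul_nonneg (le_of_lt hK0) hδ
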